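/- Let K ≥ 1 and let g : ℝ^d → ℝ^p be twice continuously differentiable with ‖∇²g‖ ≤ K and ‖∇g(v)w‖ ≥ (2K)^{−1}‖w‖ for all v, w. Then for all u ≠ v, ‖g(u) − g(v)‖² / (2 · dist(g(u) − g(v), Im(∇g(v)))) ≥ (1/(8K³)) · (1 − K⁴(8‖u−v‖ + 4‖u−v‖²)), whenever dist(g(u) − g(v), Im(∇g(v))) > 0. In particular, if ‖u−v‖ ≤ (32 K⁴)^{−1}, this quotient is at least (16K³)^{−1}. -/

import Mathlib

open Metric

set_option maxHeartbeats 1000000 in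
/-- Quantitative short-range lower bound on the Federer reach quotient
`‖g u - g v‖² / (2 dist(g u - g v, Im ∇g(v)))` for a map with bounded second derivative
and smallest singular value of the differential bounded below by `(2K)⁻¹`. -/
theorem reach_quotient_lower_bound (d p : ℕ) (K : ℝ) (hK : 1 ≤ K)
    (g : EuclideanSpace ℝ (Fin d) → EuclideanSpace ℝ (Fin p))
    (hg : ContDiff ℝ 2 g)
    (h2 : ∀ u, ‖iteratedFDeriv ℝ 2 g u‖ ≤ K)
    (h1 : ∀ v (w : EuclideanSpace ℝ (Fin d)), (2 * K)⁻¹ * ‖w‖ ≤ ‖fderiv ℝ g v w‖) :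
    ∀ u v, u ≠ v →
      0 < infDist (g u - g v)
          (LinearMap.range (fderiv ℝ g v : EuclideanSpace ℝ (Fin d) →ₗ[ℝ] EuclideanSpace ℝ (Fin p)) : Set (EuclideanSpace ℝ (Fin p))) →
      (1 / (8 * K ^ 3)) * (1 - K ^ 4 * (8 * ‖u - v‖ + 4 * ‖u - v‖ ^ 2)) ≤
          ‖g u - g v‖ ^ 2 /
            (2 * infDist (g u - g v)
              (LinearMap.range (fderiv ℝ g v : EuclideanSpace ℝ (Fin d) →ₗ[ℝ] EuclideanSpace ℝ (Fin p)) : Set (EuclideanSpace ℝ (Fin p)))) ∧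
        (‖u - v‖ ≤ (32 * K ^ 4)⁻¹ →
          (16 * K ^ 3)⁻¹ ≤
            ‖g u - g v‖ ^ 2 /
              (2 * infDist (g u - g v)
                (LinearMap.range (fderiv ℝ g v : EuclideanSpace ℝ (Fin d) →ₗ[ℝ] EuclideanSpace ℝ (Fin p)) : Set (EuclideanSpace ℝ (Fin p))))) := by
  have hK0 : (0 : ℝ) < K := lt_of_lt_of_le one_pos hK
  -- the differential is differentiable and its derivative is bounded by K
  have hgC1 : ContDiff ℝ 1 (fderiv ℝ g) := hg.fderiv_right (by norm_num)
  have hFd : Differentiable ℝ (fderiv ℝ g) := hgC1.differentiable one_ne_zero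
  have hFbound : ∀ x, ‖fderiv ℝ (fderiv ℝ g) x‖ ≤ K := by
    intro x
    refine ContinuousLinearMap.opNorm_le_bound _ hK0.le fun w => ?_
    refine ContinuousLinearMap.opNorm_le_bound _ (by positivity) fun w' => ?_
    have := iteratedFDeriv_two_apply (𝕜 := ℝ) g x ![w, w']
    simp only [Matrix.cons_val_zero, Matrix.cons_val_one, Matrix.head_cons] at this
    rw [← this]
    calc ‖iteratedFDeriv ℝ 2 g x ![w, w']‖
        ≤ ‖iteratedFDeriv ℝ 2 g x‖ * ∏ i, ‖(![w, w'] : Fin 2 → _) i‖ :=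
          ContinuousMultilinearMap.le_opNorm _ _
      _ ≤ K * (‖w‖ * ‖w'‖) := by
          rw [Fin.prod_univ_two]
          simp only [Matrix.cons_val_zero, Matrix.cons_val_one, Matrix.head_cons]
          exact mul_le_mul_of_nonneg_right (h2 x) (by positivity)
      _ = K * ‖w‖ * ‖w'‖ := by ring
  -- fderiv g is K-Lipschitz
  have hLip : ∀ x y, ‖fderiv ℝ g x - fderiv ℝ g y‖ ≤ K * ‖x - y‖ := fun x y =>
    Convex.norm_image_sub_le_of_norm_fderiv_le (fun z _ => hFd z)
      (fun z _ => hFbound z) convex_univ (Set.mem_univ y) (Set.mem_univ x)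
  intro u v huv hD
  set D := infDist (g u - g v)
      (LinearMap.range (fderiv ℝ g v : EuclideanSpace ℝ (Fin d) →ₗ[ℝ] EuclideanSpace ℝ (Fin p)) : Set (EuclideanSpace ℝ (Fin p))) with hDdef
  set r := ‖u - v‖ with hrdef
  set N := ‖g u - g v‖ with hNdef
  have hr : 0 < r := by
    rw [hrdef, norm_pos_iff]
    exact sub_ne_zero.mpr huv
  -- Taylor remainder bound
  have hTaylor : ‖g u - g v - fderiv ℝ g v (u - v)‖ ≤ K * r * r := by
    have hball : Convex ℝ (closedBall v r) := convex_closedBall v r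
    have hb : ∀ x ∈ closedBall v r, ‖fderiv ℝ g x - fderiv ℝ g v‖ ≤ K * r := by
      intro x hx
      calc ‖fderiv ℝ g x - fderiv ℝ g v‖ ≤ K * ‖x - v‖ := hLip x v
        _ ≤ K * r := by
          refine mul_le_mul_of_nonneg_left ?_ hK0.le
          simpa [dist_eq_norm] using hx
    have := hball.norm_image_sub_le_of_norm_fderiv_le' (f := g) (φ := fderiv ℝ g v)
      (x := v) (y := u)
      (fun x _ => (hg.differentiable (by norm_num)) x) hb (mem_closedBall_self hr.le)
      (by simp [mem_closedBall, dist_eq_norm, hrdef])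
    rwa [← hrdef] at this
  -- distance to the range is at most the Taylor remainder
  have hDle : D ≤ K * r ^ 2 := by
    have hmem : fderiv ℝ g v (u - v) ∈
        (LinearMap.range (fderiv ℝ g v : EuclideanSpace ℝ (Fin d) →ₗ[ℝ] EuclideanSpace ℝ (Fin p)) : Set (EuclideanSpace ℝ (Fin p))) := ⟨u - v, rfl⟩
    calc D ≤ dist (g u - g v) (fderiv ℝ g v (u - v)) := infDist_le_dist_of_mem hmem
      _ = ‖g u - g v - fderiv ℝ g v (u - v)‖ := by rw [dist_eq_norm]
      _ ≤ K * r ^ 2 := by nlinarith [hTaylor]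
  -- lower bound on N
  have hNlb : (2 * K)⁻¹ * r - K * r ^ 2 ≤ N := by
    have h := h1 v (u - v)
    have h' : ‖fderiv ℝ g v (u - v)‖ - N ≤ ‖fderiv ℝ g v (u - v) - (g u - g v)‖ := by
      simpa using norm_sub_norm_le (fderiv ℝ g v (u - v)) (g u - g v)
    have h'' : ‖fderiv ℝ g v (u - v) - (g u - g v)‖ = ‖g u - g v - fderiv ℝ g v (u - v)‖ :=
      norm_sub_rev _ _
    nlinarith [hTaylor]
  have hN0 : 0 ≤ N := norm_nonneg _
  have main : (1 / (8 * K ^ 3)) * (1 - K ^ 4 * (8 * r + 4 * r ^ 2)) ≤ N ^ 2 / (2 * D) := by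
    rcases le_or_gt (1 - K ^ 4 * (8 * r + 4 * r ^ 2)) 0 with hneg | hpos
    · calc (1 / (8 * K ^ 3)) * (1 - K ^ 4 * (8 * r + 4 * r ^ 2)) ≤ 0 :=
          mul_nonpos_of_nonneg_of_nonpos (by positivity) hneg
        _ ≤ N ^ 2 / (2 * D) := by positivity
    · have hsmall : 8 * K ^ 4 * r < 1 := by nlinarith [sq_nonneg r]
      set M := (2 * K)⁻¹ * r - K * r ^ 2 with hM
      have hinvpos : (0:ℝ) < (2 * K)⁻¹ := by positivity
      have hK24 : 2 * K ^ 2 ≤ 8 * K ^ 4 := by nlinarith [sq_nonneg K, sq_nonneg (K - 1), sq_nonneg (K^2 - 1)]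
      have h2K2r : 2 * K ^ 2 * r < 1 := by
        nlinarith [mul_le_mul_of_nonneg_right hK24 hr.le]
      have hMeq : M = (2 * K)⁻¹ * (r - 2 * K ^ 2 * r ^ 2) := by
        rw [hM]; field_simp
      have hrem : (0:ℝ) ≤ r - 2 * K ^ 2 * r ^ 2 := by
        nlinarith [mul_lt_mul_of_pos_right h2K2r hr]
      have hM0 : 0 ≤ M := by rw [hMeq]; exact mul_nonneg hinvpos.le hrem
      have step1 : N ^ 2 / (2 * (K * r ^ 2)) ≤ N ^ 2 / (2 * D) :=
        div_le_div_of_nonneg_left (by positivity) (by positivity) (by linarith)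
      have step2 : M ^ 2 / (2 * (K * r ^ 2)) ≤ N ^ 2 / (2 * (K * r ^ 2)) := by
        apply div_le_div_of_nonneg_right ?_ (by positivity)
        · exact pow_le_pow_left₀ hM0 hNlb 2
      have hQ : M ^ 2 / (2 * (K * r ^ 2)) = (1 - 2 * K ^ 2 * r) ^ 2 / (8 * K ^ 3) := by
        rw [hMeq]
        rw [div_eq_div_iff (by positivity) (by positivity)]
        field_simp
        ring
      have step3 : (1 / (8 * K ^ 3)) * (1 - K ^ 4 * (8 * r + 4 * r ^ 2)) ≤
          M ^ 2 / (2 * (K * r ^ 2)) := by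
        rw [hQ, one_div, mul_comm, ← div_eq_mul_inv]
        apply div_le_div_of_nonneg_right ?_ (by positivity)
        have hK21 : (0:ℝ) ≤ 2 * K ^ 2 - 1 := by nlinarith [sq_nonneg (K - 1)]
        nlinarith [mul_nonneg (mul_nonneg hr.le (sq_nonneg K)) hK21,
          mul_nonneg (sq_nonneg r) (sq_nonneg (K ^ 2))]
      linarith
  refine ⟨main, fun hsmall => ?_⟩
  have h32 : r * (32 * K ^ 4) ≤ 1 := by
    have := mul_le_mul_of_nonneg_right hsmall (by positivity : (0:ℝ) ≤ 32 * K ^ 4)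
    rwa [inv_mul_cancel₀ (by positivity)] at this
  have hhalf : (1 : ℝ) / 2 ≤ 1 - K ^ 4 * (8 * r + 4 * r ^ 2) := by
    have hK4 : (1 : ℝ) ≤ K ^ 4 := one_le_pow₀ hK
    nlinarith [mul_nonneg hr.le hr.le, sq_nonneg r, pow_pos hK0 4]
  have : (16 * K ^ 3)⁻¹ ≤ (1 / (8 * K ^ 3)) * (1 - K ^ 4 * (8 * r + 4 * r ^ 2)) := by
    have : (16 * K ^ 3)⁻¹ = (1 / (8 * K ^ 3)) * (1 / 2) := by
      field_simp
      ring
    rw [this]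
    exact mul_le_mul_of_nonneg_left hhalf (by positivity)
  linarith
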